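/- Let u ∈ E_Δ^{sep} satisfy φ_α(u) = u for all α ∈ Δ. Then u ∈ 𝔽_p. In particular, the intersection of the fixed rings of all partial Frobenii on E_Δ^{sep} equals 𝔽_p. -/

import Mathlib

open scoped TensorProduct Classical
set_option maxHeartbeats 1000000

section FF

variable {p : ℕ} [Fact p.Prime]

lemma frob_fix (K : Type*) [Field K] [Finite K] [Algebra (ZMod p) K]
    (x : K) (hx : x ^ p = x) : ∃ c : ZMod p, algebraMap (ZMod p) K c = x := by
  have hp1 : 1 < p := (Fact.out : p.Prime).one_lt
  classical
  haveI : Fintype K := Fintype.ofFinite K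
  have hinj : Function.Injective (algebraMap (ZMod p) K) := (algebraMap (ZMod p) K).injective
  set q : Polynomial K := Polynomial.X ^ p - Polynomial.X with hq
  have hq0 : q ≠ 0 := FiniteField.X_pow_card_sub_X_ne_zero K hp1
  set S : Finset K := q.roots.toFinset with hS
  have hcardS : S.card ≤ p := by
    calc S.card ≤ Multiset.card q.roots := q.roots.toFinset_card_le
    _ ≤ q.natDegree := q.card_roots'
    _ = p := FiniteField.X_pow_card_sub_X_natDegree_eq K hp1
  set I : Finset K := Finset.univ.image (algebraMap (ZMod p) K) with hI
  have hcardI : I.card = p := by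
    rw [hI, Finset.card_image_of_injective _ hinj, Finset.card_univ, ZMod.card]
  have hsub : I ⊆ S := by
    intro y hy
    rw [hI, Finset.mem_image] at hy
    obtain ⟨c, _, rfl⟩ := hy
    rw [hS, Multiset.mem_toFinset, Polynomial.mem_roots hq0]
    simp only [q, Polynomial.IsRoot, Polynomial.eval_sub, Polynomial.eval_pow, Polynomial.eval_X]
    rw [← map_pow, ZMod.pow_card, sub_self]
  have hSI : S = I := (Finset.eq_of_subset_of_card_le hsub (hcardI ▸ hcardS)).symm
  have hxS : x ∈ S := by
    rw [hS, Multiset.mem_toFinset, Polynomial.mem_roots hq0]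
    simp [q, Polynomial.IsRoot, hx]
  rw [hSI, hI, Finset.mem_image] at hxS
  obtain ⟨c, _, hc⟩ := hxS
  exact ⟨c, hc⟩

end FF


section Tensor
variable (p : ℕ) [Fact p.Prime] {d : ℕ} (K : Fin d → Type)
  [∀ i, Field (K i)] [∀ i, Finite (K i)] [∀ i, Algebra (ZMod p) (K i)]

noncomputable def hli (i : Fin d) :
    LinearIndepOn (ZMod p) id ({(1 : K i)} : Set (K i)) :=
  (linearIndepOn_singleton_iff (ZMod p)).mpr one_ne_zero

noncomputable def es (i : Fin d) : Set (K i) := (hli p K i).extend (Set.subset_univ _)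

noncomputable def bs (i : Fin d) : Module.Basis (es p K i) (ZMod p) (K i) := Module.Basis.extend (hli p K i)

noncomputable def oi (i : Fin d) : es p K i :=
  ⟨1, (hli p K i).subset_extend _ rfl⟩

lemma bs_apply (i : Fin d) (k : es p K i) : bs p K i k = (k : K i) :=
  Module.Basis.extend_apply_self _ _

lemma bs_oi (i : Fin d) : bs p K i (oi p K i) = 1 := bs_apply p K i _

noncomputable instance (i : Fin d) : Fintype (es p K i) := Fintype.ofFinite _

private lemma prod_upd [DecidableEq (Fin d)] (x : ∀ i, K i) (α : Fin d) (m : ∀ i, es p K i) (w : K α) :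
    (∏ i, (bs p K i).repr (Function.update x α w i) (m i))
      = (bs p K α).repr w (m α) * ∏ i ∈ Finset.univ.erase α, (bs p K i).repr (x i) (m i) := by
  rw [← Finset.mul_prod_erase Finset.univ _ (Finset.mem_univ α)]
  congr 1
  · rw [Function.update_self]
  · exact Finset.prod_congr rfl fun i hi => by
      rw [Function.update_of_ne (Finset.ne_of_mem_erase hi)]

/-- the multilinear coordinate map -/
noncomputable def ML : MultilinearMap (ZMod p) K ((∀ i, es p K i) → ZMod p) where
  toFun x m := ∏ i, (bs p K i).repr (x i) (m i)
  map_update_add' x α u v := by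
    funext m
    show (∏ i, (bs p K i).repr ((Function.update x α (u + v)) i) (m i))
      = (∏ i, (bs p K i).repr ((Function.update x α u) i) (m i))
        + (∏ i, (bs p K i).repr ((Function.update x α v) i) (m i))
    rw [prod_upd, prod_upd, prod_upd, map_add, Finsupp.add_apply, add_mul]
  map_update_smul' x α c u := by
    funext m
    show (∏ i, (bs p K i).repr ((Function.update x α (c • u)) i) (m i))
      = c * (∏ i, (bs p K i).repr ((Function.update x α u) i) (m i))
    rw [prod_upd, prod_upd, map_smul, Finsupp.smul_apply, smul_eq_mul, mul_assoc]

noncomputable def Φ : (⨂[ZMod p] i, K i) →ₗ[ZMod p] ((∀ i, es p K i) → ZMod p) :=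
  PiTensorProduct.lift (ML p K)

lemma Φ_tprod (x : ∀ i, K i) (m : ∀ i, es p K i) :
    Φ p K (PiTensorProduct.tprod (ZMod p) x) m = ∏ i, (bs p K i).repr (x i) (m i) := by
  rw [Φ, PiTensorProduct.lift.tprod]; rfl

/-- expansion of any element in the product "basis" -/
lemma expansion (a : ⨂[ZMod p] i, K i) :
    a = ∑ m : ∀ i, es p K i, Φ p K a m • PiTensorProduct.tprod (ZMod p) (fun i => bs p K i (m i)) := by
  induction a using PiTensorProduct.induction_on with
  | smul_tprod r x =>
    have h1 : PiTensorProduct.tprod (ZMod p) x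
        = ∑ m : ∀ i, es p K i, (∏ i, (bs p K i).repr (x i) (m i)) •
            PiTensorProduct.tprod (ZMod p) (fun i => bs p K i (m i)) := by
      conv_lhs => rw [show x = fun i => ∑ k : es p K i, (bs p K i).repr (x i) k • bs p K i k by
        funext i; rw [Module.Basis.sum_repr]]
      rw [MultilinearMap.map_sum]
      refine Finset.sum_congr rfl fun m _ => ?_
      rw [MultilinearMap.map_smul_univ]
    conv_lhs => rw [h1]
    rw [Finset.smul_sum]
    refine Finset.sum_congr rfl fun m _ => ?_
    rw [smul_smul, map_smul]
    simp only [Pi.smul_apply, Φ_tprod, smul_eq_mul]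
  | add y z hy hz =>
    conv_lhs => rw [hy, hz]
    rw [← Finset.sum_add_distrib]
    refine Finset.sum_congr rfl fun m _ => ?_
    rw [map_add]
    simp only [Pi.add_apply, add_smul]


section Sigma
variable (σ : ∀ _ : Fin d, (⨂[ZMod p] i, K i) →+* (⨂[ZMod p] i, K i))
  (hσ : ∀ (α : Fin d) (x : ∀ i, K i),
      σ α (PiTensorProduct.tprod (ZMod p) x) =
        PiTensorProduct.tprod (ZMod p) (Function.update x α ((x α) ^ p)))

lemma sigma_smul (α : Fin d) (r : ZMod p) (y : ⨂[ZMod p] i, K i) :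
    σ α (r • y) = r • σ α y := by
  have h : (σ α).comp (algebraMap (ZMod p) _) = algebraMap _ _ := RingHom.ext_zmod _ _
  rw [Algebra.smul_def, map_mul, ← RingHom.comp_apply, h, ← Algebra.smul_def]

include hσ in
lemma sliceFrob (a : ⨂[ZMod p] i, K i) (α : Fin d) (m : ∀ i, es p K i) :
    (∑ k : es p K α, Φ p K a (Function.update m α k) • bs p K α k) ^ p
      = ∑ k : es p K α, Φ p K (σ α a) (Function.update m α k) • bs p K α k := by
  haveI : CharP (K α) p := charP_of_injective_algebraMap (algebraMap (ZMod p) (K α)).injective p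
  have comp : ∀ (y : ∀ i, K i),
      (∑ k : es p K α, Φ p K (PiTensorProduct.tprod (ZMod p) y) (Function.update m α k) •
          bs p K α k)
        = (∏ i ∈ Finset.univ.erase α, (bs p K i).repr (y i) (m i)) • y α := by
    intro y
    have h1 : ∀ k : es p K α,
        Φ p K (PiTensorProduct.tprod (ZMod p) y) (Function.update m α k)
          = (bs p K α).repr (y α) k * ∏ i ∈ Finset.univ.erase α, (bs p K i).repr (y i) (m i) := by
      intro k
      rw [Φ_tprod, ← Finset.mul_prod_erase Finset.univ _ (Finset.mem_univ α)]
      congr 1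
      · rw [Function.update_self]
      · exact Finset.prod_congr rfl fun i hi => by
          rw [Function.update_of_ne (Finset.ne_of_mem_erase hi)]
    simp only [h1]
    rw [← Module.Basis.sum_repr (bs p K α) (y α), Finset.smul_sum]
    refine Finset.sum_congr rfl fun k _ => ?_
    rw [Module.Basis.repr_sum_self]
    rw [mul_comm, mul_smul]
  induction a using PiTensorProduct.induction_on with
  | smul_tprod r x =>
    have hL : ∀ (z : ⨂[ZMod p] i, K i),
        (∑ k : es p K α, Φ p K (r • z) (Function.update m α k) • bs p K α k)
          = r • ∑ k : es p K α, Φ p K z (Function.update m α k) • bs p K α k := by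
      intro z
      rw [Finset.smul_sum]
      refine Finset.sum_congr rfl fun k _ => ?_
      rw [map_smul]
      simp only [Pi.smul_apply, smul_eq_mul, mul_smul]
    rw [sigma_smul p K σ, hσ, hL, hL, comp, comp]
    have hc : (∏ i ∈ Finset.univ.erase α,
          (bs p K i).repr ((Function.update x α ((x α) ^ p)) i) (m i))
        = ∏ i ∈ Finset.univ.erase α, (bs p K i).repr (x i) (m i) :=
      Finset.prod_congr rfl fun i hi => by
        rw [Function.update_of_ne (Finset.ne_of_mem_erase hi)]
    rw [hc, Function.update_self]
    rw [smul_smul, smul_smul, smul_pow, ZMod.pow_card]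
  | add y z hy hz =>
    have hadd : ∀ (w w' : ⨂[ZMod p] i, K i),
        (∑ k : es p K α, Φ p K (w + w') (Function.update m α k) • bs p K α k)
          = (∑ k : es p K α, Φ p K w (Function.update m α k) • bs p K α k)
            + ∑ k : es p K α, Φ p K w' (Function.update m α k) • bs p K α k := by
      intro w w'
      rw [← Finset.sum_add_distrib]
      refine Finset.sum_congr rfl fun k _ => ?_
      rw [map_add]
      simp only [Pi.add_apply, add_smul]
    rw [hadd, map_add, hadd, add_pow_char, hy, hz]

include hσ in
lemma sigma_inj (α : Fin d) : Function.Injective (σ α) := by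
  intro a b hab
  have h0 : σ α (a - b) = 0 := by rw [map_sub, hab, sub_self]
  rw [← sub_eq_zero]
  set z := a - b with hz
  have hm : ∀ m : ∀ i, es p K i, Φ p K z m = 0 := by
    intro m
    have hs := sliceFrob p K σ hσ z α m
    rw [h0] at hs
    simp only [map_zero, Pi.zero_apply, zero_smul, Finset.sum_const_zero] at hs
    have hY : (∑ k : es p K α, Φ p K z (Function.update m α k) • bs p K α k) = 0 :=
      pow_eq_zero_iff (Fact.out : p.Prime).ne_zero |>.mp hs
    have hcoef := Fintype.linearIndependent_iff.mp (bs p K α).linearIndependent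
      (fun k => Φ p K z (Function.update m α k)) hY (m α)
    rwa [Function.update_eq_self] at hcoef
  rw [expansion p K z]
  simp [hm]

include hσ in
lemma fixed_constant (a : ⨂[ZMod p] i, K i) (hfix : ∀ α, σ α a = a) :
    ∃ c : ZMod p, a = algebraMap (ZMod p) _ c := by
  have key : ∀ (m : ∀ i, es p K i) (α : Fin d), m α ≠ oi p K α → Φ p K a m = 0 := by
    intro m α hne
    have hs := sliceFrob p K σ hσ a α m
    rw [hfix α] at hs
    obtain ⟨c, hc⟩ := frob_fix (K α) _ hs
    have hY : ∑ k : es p K α, Φ p K a (Function.update m α k) • bs p K α k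
        = ∑ k : es p K α, (if k = oi p K α then c else 0) • bs p K α k := by
      rw [← hc]
      have : ∀ k : es p K α, (if k = oi p K α then c else 0) • bs p K α k
          = if k = oi p K α then c • bs p K α k else 0 := by
        intro k; split <;> simp
      rw [Finset.sum_congr rfl fun k _ => this k, Finset.sum_ite_eq' Finset.univ (oi p K α)]
      rw [if_pos (Finset.mem_univ _), bs_oi, Algebra.algebraMap_eq_smul_one]
    have hdiff : ∑ k : es p K α,
        (Φ p K a (Function.update m α k) - (if k = oi p K α then c else 0)) • bs p K α k = 0 := by
      simp only [sub_smul]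
      rw [Finset.sum_sub_distrib, hY, sub_self]
    have hcoef := Fintype.linearIndependent_iff.mp (bs p K α).linearIndependent _ hdiff (m α)
    rw [if_neg hne, sub_zero, Function.update_eq_self] at hcoef
    exact hcoef
  refine ⟨Φ p K a (fun i => oi p K i), ?_⟩
  conv_lhs => rw [expansion p K a]
  rw [Finset.sum_eq_single (fun i => oi p K i)]
  · have h1 : (fun i => bs p K i (oi p K i)) = fun i => (1 : K i) :=
      funext fun i => bs_oi p K i
    rw [h1, Algebra.algebraMap_eq_smul_one]
    rfl
  · intro m _ hne
    have : ∃ α, m α ≠ oi p K α := by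
      by_contra hcon
      push_neg at hcon
      exact hne (funext hcon)
    obtain ⟨α, hα⟩ := this
    rw [key m α hα, zero_smul]
  · intro h
    exact absurd (Finset.mem_univ _) h

end Sigma
end Tensor
section PS
variable {B : Type*} [CommRing B] {d : ℕ}

lemma prod_monomial_one (s : Finset (Fin d)) (g : Fin d → (Fin d →₀ ℕ)) :
    (∏ i ∈ s, MvPowerSeries.monomial (R := B) (g i) 1)
      = MvPowerSeries.monomial (R := B) (∑ i ∈ s, g i) 1 := by
  classical
  induction s using Finset.induction_on with
  | empty => simp [MvPowerSeries.monomial_zero_one]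
  | insert _ _ hx ih =>
    rw [Finset.prod_insert hx, Finset.sum_insert hx, ih,
      MvPowerSeries.monomial_mul_monomial, one_mul]

lemma monomial_one_pow (e : Fin d →₀ ℕ) (n : ℕ) :
    (MvPowerSeries.monomial (R := B) e 1) ^ n = MvPowerSeries.monomial (R := B) (n • e) 1 := by
  induction n with
  | zero => simp [MvPowerSeries.monomial_zero_one]
  | succ n ih =>
    rw [pow_succ, ih, MvPowerSeries.monomial_mul_monomial, one_mul, succ_nsmul]

lemma monomial_one_cancel (e : Fin d →₀ ℕ) {g h : MvPowerSeries (Fin d) B}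
    (H : g * MvPowerSeries.monomial (R := B) e 1 = h * MvPowerSeries.monomial (R := B) e 1) : g = h := by
  ext m
  have := congrArg (MvPowerSeries.coeff (R := B) (m + e)) H
  rwa [MvPowerSeries.coeff_add_mul_monomial, MvPowerSeries.coeff_add_mul_monomial,
    mul_one, mul_one] at this

end PS
section Aux2
variable {p d : ℕ} [Fact p.Prime]

lemma statement10_aux (B : Type) [CommRing B] [Algebra (ZMod p) B]
    (σ : Fin d → B →+* B)
    (hinjσ : ∀ α, Function.Injective (σ α))
    (hfix : ∀ a : B, (∀ α, σ α a = a) → ∃ c : ZMod p, a = algebraMap (ZMod p) B c)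
    (φ : ∀ _ : Fin d,
      Localization.Away (∏ i : Fin d, MvPowerSeries.X (σ := Fin d) (R := B) i) →+*
      Localization.Away (∏ i : Fin d, MvPowerSeries.X (σ := Fin d) (R := B) i))
    (hφ : ∀ (α : Fin d) (f : MvPowerSeries (Fin d) B),
      φ α (algebraMap _ _ f) =
        algebraMap (MvPowerSeries (Fin d) B) _
          ((fun m => if p ∣ m α
              then σ α (MvPowerSeries.coeff (Finsupp.update m α (m α / p)) f)
              else 0 : (Fin d →₀ ℕ) → B)))
    (u : Localization.Away (∏ i : Fin d, MvPowerSeries.X (σ := Fin d) (R := B) i))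
    (hu : ∀ α, φ α u = u) :
    ∃ c : ZMod p,
      u = algebraMap (MvPowerSeries (Fin d) B) _
            (MvPowerSeries.C (σ := Fin d) (R := B) (algebraMap (ZMod p) B c)) := by
  classical
  have hp1 : 1 < p := (Fact.out : p.Prime).one_lt
  have hp0 : 0 < p := by omega
  set A : MvPowerSeries (Fin d) B →+*
      Localization.Away (∏ i : Fin d, MvPowerSeries.X (σ := Fin d) (R := B) i) :=
    algebraMap _ _ with hA
  set cst : ℕ → (Fin d →₀ ℕ) := fun n => Finsupp.equivFunOnFinite.symm (fun _ => n) with hcst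
  have cst_apply : ∀ n i, cst n i = n := fun _ _ => rfl
  have hXmono : ∀ i : Fin d, (MvPowerSeries.X i : MvPowerSeries (Fin d) B)
      = MvPowerSeries.monomial (R := B) (Finsupp.single i 1) 1 := fun i => rfl
  have hsum1 : (∑ i : Fin d, Finsupp.single i (1:ℕ)) = cst 1 := by
    ext j
    rw [Finsupp.finset_sum_apply, Finset.sum_eq_single j (fun i _ hij => Finsupp.single_eq_of_ne' hij)
      (fun h => absurd (Finset.mem_univ _) h), Finsupp.single_eq_same, cst_apply]
  have ht : (∏ i : Fin d, MvPowerSeries.X i : MvPowerSeries (Fin d) B)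
      = MvPowerSeries.monomial (R := B) (cst 1) 1 := by
    rw [Finset.prod_congr rfl (fun i _ => hXmono i), prod_monomial_one, hsum1]
  have hcstn : ∀ n : ℕ, n • cst 1 = cst n := by
    intro n
    ext j
    rw [Finsupp.smul_apply, cst_apply, cst_apply, smul_eq_mul, mul_one]
  have htn : ∀ n : ℕ, (∏ i : Fin d, MvPowerSeries.X i : MvPowerSeries (Fin d) B) ^ n
      = MvPowerSeries.monomial (R := B) (cst n) 1 := by
    intro n
    rw [ht, monomial_one_pow, hcstn]
  -- injectivity of the localization map
  have hreg : (∏ i : Fin d, MvPowerSeries.X i : MvPowerSeries (Fin d) B)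
      ∈ nonZeroDivisors (MvPowerSeries (Fin d) B) := by
    rw [mem_nonZeroDivisors_iff_right]
    intro g hg
    refine monomial_one_cancel (cst 1) (g := g) (h := 0) ?_
    rw [zero_mul, ← ht, hg]
  have hinj : Function.Injective A := IsLocalization.injective _ (Submonoid.powers_le.mpr hreg)
  -- surjectivity
  obtain ⟨⟨f, s⟩, hs⟩ := IsLocalization.surj
    (M := Submonoid.powers (∏ i : Fin d, MvPowerSeries.X i : MvPowerSeries (Fin d) B)) u
  obtain ⟨n, hn⟩ := s.2
  have hn' : (∏ i : Fin d, MvPowerSeries.X i : MvPowerSeries (Fin d) B) ^ n = s.1 := hn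
  have e1 : u * A (MvPowerSeries.monomial (R := B) (cst n) 1) = A f := by
    rw [← htn n, hA, hn']
    exact hs
  -- the coefficientwise Frobenius
  set Fr : Fin d → MvPowerSeries (Fin d) B → MvPowerSeries (Fin d) B := fun α g =>
    (fun m => if p ∣ m α
        then σ α (MvPowerSeries.coeff (Finsupp.update m α (m α / p)) g)
        else 0) with hFr
  have hφ' : ∀ (α : Fin d) (g : MvPowerSeries (Fin d) B), φ α (A g) = A (Fr α g) := hφ
  have hFrcoeff : ∀ (α : Fin d) (g : MvPowerSeries (Fin d) B) (m : Fin d →₀ ℕ),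
      MvPowerSeries.coeff (R := B) m (Fr α g)
        = if p ∣ m α then σ α (MvPowerSeries.coeff (R := B) (Finsupp.update m α (m α / p)) g)
          else 0 := fun _ _ _ => rfl
  have hFrmono : ∀ (α : Fin d) (e : Fin d →₀ ℕ) (r : B),
      Fr α (MvPowerSeries.monomial (R := B) e r)
        = MvPowerSeries.monomial (R := B) (Finsupp.update e α (p * e α)) (σ α r) := by
    intro α e r
    ext m
    rw [hFrcoeff, MvPowerSeries.coeff_monomial, MvPowerSeries.coeff_monomial]
    by_cases h1 : p ∣ m α
    · rw [if_pos h1]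
      by_cases h2 : Finsupp.update m α (m α / p) = e
      · have hme : m = Finsupp.update e α (p * e α) := by
          subst h2
          ext i
          by_cases hi : i = α
          · subst hi
            simp only [Finsupp.coe_update, Function.update_self]
            exact (Nat.mul_div_cancel' h1).symm
          · simp [Finsupp.coe_update, Function.update_of_ne hi]
        rw [if_pos h2, if_pos hme]
      · have hme : m ≠ Finsupp.update e α (p * e α) := by
          intro hcon
          apply h2
          subst hcon
          ext i
          by_cases hi : i = α
          · subst hi
            simp only [Finsupp.coe_update, Function.update_self]
            exact Nat.mul_div_cancel_left _ hp0
          · simp [Finsupp.coe_update, Function.update_of_ne hi]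
        rw [if_neg h2, map_zero, if_neg hme]
    · rw [if_neg h1, if_neg]
      intro hcon
      apply h1
      rw [hcon]
      simp only [Finsupp.coe_update, Function.update_self]
      exact dvd_mul_right _ _
  -- the key relation for each α
  have key : ∀ α : Fin d, Fr α f
      = f * MvPowerSeries.monomial (R := B) (Finsupp.single α ((p - 1) * n)) 1 := by
    intro α
    have e3 : u * A (Fr α (MvPowerSeries.monomial (R := B) (cst n) 1)) = A (Fr α f) := by
      have h := congrArg (φ α) e1
      rw [map_mul, hu α, hφ' α, hφ' α] at h
      exact h
    have hfrtn : Fr α (MvPowerSeries.monomial (R := B) (cst n) 1)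
        = MvPowerSeries.monomial (R := B) (Finsupp.update (cst n) α (p * n)) 1 := by
      rw [hFrmono, map_one]
      congr 2
    rw [hfrtn] at e3
    have e4 : A (f * MvPowerSeries.monomial (R := B) (Finsupp.update (cst n) α (p * n)) 1)
        = A (Fr α f * MvPowerSeries.monomial (R := B) (cst n) 1) := by
      rw [map_mul, map_mul, ← e1, ← e3]
      ring
    have e5 := hinj e4
    have hw : Finsupp.update (cst n) α (p * n)
        = Finsupp.single α ((p - 1) * n) + cst n := by
      ext i
      by_cases hi : i = α
      · subst hi
        simp only [Finsupp.coe_update, Function.update_self, Finsupp.add_apply,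
          Finsupp.single_eq_same, cst_apply]
        have h4 : p * n = n + (p - 1) * n := by
          have hpp : 1 + (p - 1) = p := by omega
          calc p * n = (1 + (p - 1)) * n := by rw [hpp]
          _ = n + (p - 1) * n := by rw [add_mul, one_mul]
        omega
      · simp [Finsupp.coe_update, Function.update_of_ne hi, Finsupp.single_eq_of_ne'
          (fun h => hi h.symm), cst_apply]
    have hsplit : MvPowerSeries.monomial (R := B) (Finsupp.single α ((p - 1) * n) + cst n) 1
        = MvPowerSeries.monomial (R := B) (Finsupp.single α ((p - 1) * n)) 1
            * MvPowerSeries.monomial (R := B) (cst n) 1 := by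
      rw [MvPowerSeries.monomial_mul_monomial, one_mul]
    rw [hw, hsplit, ← mul_assoc] at e5
    exact (monomial_one_cancel (cst n) e5).symm
  -- coefficientwise consequence
  have hc : ∀ (α : Fin d) (m : Fin d →₀ ℕ),
      (if p ∣ m α then σ α (MvPowerSeries.coeff (R := B) (Finsupp.update m α (m α / p)) f) else 0)
        = if Finsupp.single α ((p - 1) * n) ≤ m
            then MvPowerSeries.coeff (R := B) (m - Finsupp.single α ((p - 1) * n)) f
            else 0 := by
    intro α m
    rw [← hFrcoeff, key α, MvPowerSeries.coeff_mul_monomial, mul_one]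
  -- claim A : coefficients with some exponent < n vanish
  have stepA : ∀ (l : Fin d →₀ ℕ) (α : Fin d), l α < n →
      (∀ l' : Fin d →₀ ℕ, l' α < l α → l' α < n → MvPowerSeries.coeff (R := B) l' f = 0) →
      MvPowerSeries.coeff (R := B) l f = 0 := by
    intro l α hln IH
    have h := hc α (Finsupp.update l α (p * l α))
    have hmα : (Finsupp.update l α (p * l α)) α = p * l α := by
      simp [Finsupp.coe_update]
    have hdvd : p ∣ (Finsupp.update l α (p * l α)) α := by
      rw [hmα]; exact dvd_mul_right _ _
    have hupd : Finsupp.update (Finsupp.update l α (p * l α)) α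
        ((Finsupp.update l α (p * l α)) α / p) = l := by
      ext i
      by_cases hi : i = α
      · subst hi
        simp only [Finsupp.coe_update, Function.update_self]
        exact Nat.mul_div_cancel_left _ hp0
      · simp [Finsupp.coe_update, Function.update_of_ne hi]
    rw [if_pos hdvd, hupd] at h
    have h4 : p * l α = l α + (p - 1) * l α := by
      have hpp : 1 + (p - 1) = p := by omega
      calc p * l α = (1 + (p - 1)) * l α := by rw [hpp]
      _ = l α + (p - 1) * l α := by rw [add_mul, one_mul]
    have h5 : (p - 1) * l α < (p - 1) * n :=
      mul_lt_mul_of_pos_left hln (by omega)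
    by_cases hle : Finsupp.single α ((p - 1) * n) ≤ Finsupp.update l α (p * l α)
    · rw [if_pos hle] at h
      have h6 : (p - 1) * n ≤ p * l α := by
        have h7 := Finsupp.single_le_iff.mp hle
        rwa [hmα] at h7
      have h1 : (Finsupp.update l α (p * l α) - Finsupp.single α ((p - 1) * n)) α
          = p * l α - (p - 1) * n := by
        simp [Finsupp.coe_tsub, hmα, Finsupp.single_eq_same]
      have h2 : p * l α - (p - 1) * n < l α := by omega
      have h0 := IH _ (by rw [h1]; exact h2) (by rw [h1]; omega)
      rw [h0] at h
      exact hinjσ α (h.trans (map_zero (σ α)).symm)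
    · rw [if_neg hle] at h
      exact hinjσ α (h.trans (map_zero (σ α)).symm)
  have claimA : ∀ (α : Fin d) (v : ℕ) (l : Fin d →₀ ℕ), l α ≤ v → l α < n →
      MvPowerSeries.coeff (R := B) l f = 0 := by
    intro α v
    induction v with
    | zero => exact fun l h0 hlt => stepA l α hlt (fun l' h' _ => by omega)
    | succ v IH => exact fun l hle hlt => stepA l α hlt (fun l' h1 h2 => IH l' (by omega) h2)
  -- claim B : coefficients with some exponent > n vanish
  have stepB : ∀ (l : Fin d →₀ ℕ) (α : Fin d), n < l α →
      (∀ l' : Fin d →₀ ℕ, n < l' α → l' α < l α → MvPowerSeries.coeff (R := B) l' f = 0) →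
      MvPowerSeries.coeff (R := B) l f = 0 := by
    intro l α hln IH
    have h := hc α (Finsupp.update l α (l α + (p - 1) * n))
    have hmα : (Finsupp.update l α (l α + (p - 1) * n)) α = l α + (p - 1) * n := by
      simp [Finsupp.coe_update]
    have hle : Finsupp.single α ((p - 1) * n) ≤ Finsupp.update l α (l α + (p - 1) * n) := by
      rw [Finsupp.single_le_iff, hmα]; omega
    have hsub : Finsupp.update l α (l α + (p - 1) * n) - Finsupp.single α ((p - 1) * n)
        = l := by
      ext i
      by_cases hi : i = α
      · subst hi
        simp [Finsupp.coe_tsub, hmα, Finsupp.single_eq_same]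
      · simp [Finsupp.coe_tsub, Finsupp.coe_update, Function.update_of_ne hi,
          Finsupp.single_eq_of_ne' (fun hq => hi hq.symm)]
    rw [if_pos hle, hsub] at h
    by_cases hdvd : p ∣ (Finsupp.update l α (l α + (p - 1) * n)) α
    · rw [if_pos hdvd] at h
      set k := (Finsupp.update l α (l α + (p - 1) * n)) α / p with hk
      have hpk : p * k = l α + (p - 1) * n := by
        rw [hk, Nat.mul_div_cancel' hdvd, hmα]
      have e2 : p * l α = l α + (p - 1) * l α := by
        have hpp : 1 + (p - 1) = p := by omega
        calc p * l α = (1 + (p - 1)) * l α := by rw [hpp]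
        _ = l α + (p - 1) * l α := by rw [add_mul, one_mul]
      have e2n : p * n = n + (p - 1) * n := by
        have hpp : 1 + (p - 1) = p := by omega
        calc p * n = (1 + (p - 1)) * n := by rw [hpp]
        _ = n + (p - 1) * n := by rw [add_mul, one_mul]
      have e3 : (p - 1) * n < (p - 1) * l α :=
        mul_lt_mul_of_pos_left hln (by omega)
      have hkn : n < k := by
        by_contra hcon
        push_neg at hcon
        have : p * k ≤ p * n := Nat.mul_le_mul_left _ hcon
        omega
      have hkl : k < l α := by
        have hlt : p * k < p * l α := by omega
        exact lt_of_mul_lt_mul_left hlt (Nat.zero_le _)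
      have hupdk : (Finsupp.update (Finsupp.update l α (l α + (p - 1) * n)) α k) α = k := by
        simp [Finsupp.coe_update]
      have h0 := IH (Finsupp.update (Finsupp.update l α (l α + (p - 1) * n)) α k)
        (by rw [hupdk]; exact hkn) (by rw [hupdk]; exact hkl)
      rw [h0, map_zero] at h
      exact h.symm
    · rw [if_neg hdvd] at h
      exact h.symm
  have claimB : ∀ (α : Fin d) (v : ℕ) (l : Fin d →₀ ℕ), l α ≤ n + v → n < l α →
      MvPowerSeries.coeff (R := B) l f = 0 := by
    intro α v
    induction v with
    | zero => exact fun l h0 hlt => by omega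
    | succ v IH => exact fun l hle hlt => stepB l α hlt (fun l' h1 h2 => IH l' (by omega) h1)
  -- claim C : the middle coefficient is fixed by all σ α
  have hfixa : ∀ α : Fin d, σ α (MvPowerSeries.coeff (R := B) (cst n) f)
      = MvPowerSeries.coeff (R := B) (cst n) f := by
    intro α
    have h := hc α (Finsupp.update (cst n) α (p * n))
    have hmα : (Finsupp.update (cst n) α (p * n)) α = p * n := by
      simp [Finsupp.coe_update]
    have e2n : p * n = n + (p - 1) * n := by
      have hpp : 1 + (p - 1) = p := by omega
      calc p * n = (1 + (p - 1)) * n := by rw [hpp]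
      _ = n + (p - 1) * n := by rw [add_mul, one_mul]
    have hdvd : p ∣ (Finsupp.update (cst n) α (p * n)) α := by
      rw [hmα]; exact dvd_mul_right _ _
    have hupd : Finsupp.update (Finsupp.update (cst n) α (p * n)) α
        ((Finsupp.update (cst n) α (p * n)) α / p) = cst n := by
      ext i
      by_cases hi : i = α
      · subst hi
        simp only [Finsupp.coe_update, Function.update_self]
        rw [Nat.mul_div_cancel_left _ hp0, cst_apply]
      · simp [Finsupp.coe_update, Function.update_of_ne hi]
    have hle : Finsupp.single α ((p - 1) * n) ≤ Finsupp.update (cst n) α (p * n) := by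
      rw [Finsupp.single_le_iff, hmα]; omega
    have hsub : Finsupp.update (cst n) α (p * n) - Finsupp.single α ((p - 1) * n)
        = cst n := by
      ext i
      by_cases hi : i = α
      · subst hi
        simp only [Finsupp.coe_tsub, Pi.sub_apply, hmα, Finsupp.single_eq_same]
        rw [cst_apply]
        omega
      · simp [Finsupp.coe_tsub, Finsupp.coe_update, Function.update_of_ne hi,
          Finsupp.single_eq_of_ne' (fun hq => hi hq.symm)]
    rw [if_pos hdvd, hupd, if_pos hle, hsub] at h
    exact h
  obtain ⟨c, hcval⟩ := hfix _ hfixa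
  -- f is the single monomial
  have hf : f = MvPowerSeries.monomial (R := B) (cst n) (MvPowerSeries.coeff (R := B) (cst n) f) := by
    ext m
    rw [MvPowerSeries.coeff_monomial]
    by_cases hm : m = cst n
    · rw [if_pos hm, hm]
    · rw [if_neg hm]
      have hex : ∃ α, m α ≠ n := by
        by_contra hcon
        push_neg at hcon
        exact hm (Finsupp.ext fun i => (hcon i).trans (cst_apply n i).symm)
      obtain ⟨α, hα⟩ := hex
      rcases Nat.lt_or_ge (m α) n with hlt | hge
      · exact claimA α (m α) m le_rfl hlt
      · have hgt : n < m α := lt_of_le_of_ne hge (Ne.symm hα)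
        exact claimB α (m α) m (by omega) hgt
  -- conclude
  refine ⟨c, ?_⟩
  have hCm : MvPowerSeries.C (σ := Fin d) (R := B) (MvPowerSeries.coeff (R := B) (cst n) f)
      * MvPowerSeries.monomial (R := B) (cst n) 1 = f := by
    conv_rhs => rw [hf]
    rw [show (MvPowerSeries.C (σ := Fin d) (R := B) (MvPowerSeries.coeff (R := B) (cst n) f))
        = MvPowerSeries.monomial (R := B) 0 (MvPowerSeries.coeff (R := B) (cst n) f) from rfl,
      MvPowerSeries.monomial_mul_monomial, zero_add, mul_one]
  have e6 : u * A (MvPowerSeries.monomial (R := B) (cst n) 1)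
      = A (MvPowerSeries.C (σ := Fin d) (R := B) (MvPowerSeries.coeff (R := B) (cst n) f))
          * A (MvPowerSeries.monomial (R := B) (cst n) 1) := by
    rw [← map_mul, hCm, e1]
  have hunit : IsUnit (A (MvPowerSeries.monomial (R := B) (cst n) 1)) := by
    rw [← htn n]
    exact IsLocalization.map_units _
      ⟨_, Submonoid.pow_mem _ (Submonoid.mem_powers
        (∏ i : Fin d, MvPowerSeries.X i : MvPowerSeries (Fin d) B)) n⟩
  have e7 : u = A (MvPowerSeries.C (σ := Fin d) (R := B) (MvPowerSeries.coeff (R := B) (cst n) f)) := by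
    rw [mul_comm u, mul_comm _ (A (MvPowerSeries.monomial (R := B) (cst n) 1))] at e6
    exact hunit.mul_left_cancel e6
  rw [e7, hcval]

end Aux2

theorem statement_10 (p d : ℕ) [Fact p.Prime] (hd : 1 ≤ d)
    (K : Fin d → Type) [∀ i, Field (K i)] [∀ i, Finite (K i)] [∀ i, Algebra (ZMod p) (K i)]
    (σ : ∀ _ : Fin d, (⨂[ZMod p] i, K i) →+* (⨂[ZMod p] i, K i))
    (hσ : ∀ (α : Fin d) (x : ∀ i, K i),
      σ α (PiTensorProduct.tprod (ZMod p) x) =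
        PiTensorProduct.tprod (ZMod p) (Function.update x α ((x α) ^ p)))
    (φ : ∀ _ : Fin d,
      Localization.Away (∏ i : Fin d, MvPowerSeries.X (σ := Fin d) (R := ⨂[ZMod p] i, K i) i) →+*
      Localization.Away (∏ i : Fin d, MvPowerSeries.X (σ := Fin d) (R := ⨂[ZMod p] i, K i) i))
    (hφ : ∀ (α : Fin d) (f : MvPowerSeries (Fin d) (⨂[ZMod p] i, K i)),
      φ α (algebraMap _ _ f) =
        algebraMap (MvPowerSeries (Fin d) (⨂[ZMod p] i, K i)) _
          ((fun m => if p ∣ m α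
              then σ α (MvPowerSeries.coeff (Finsupp.update m α (m α / p)) f)
              else 0 : (Fin d →₀ ℕ) → (⨂[ZMod p] i, K i)))) :
    ∀ u : Localization.Away
        (∏ i : Fin d, MvPowerSeries.X (σ := Fin d) (R := ⨂[ZMod p] i, K i) i),
      (∀ α, φ α u = u) →
      ∃ c : ZMod p,
        u = algebraMap (MvPowerSeries (Fin d) (⨂[ZMod p] i, K i)) _
              (MvPowerSeries.C (σ := Fin d) (R := ⨂[ZMod p] i, K i) (algebraMap (ZMod p) _ c)) := by
  intro u hu
  exact statement10_aux (⨂[ZMod p] i, K i) σ (sigma_inj p K σ hσ)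
    (fixed_constant p K σ hσ) φ hφ u hu
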